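/- Let f : [a,b] → ℝ be monotone, g : [a,b] → ℂ continuous, and write I = ∫_a^b f(x) g(x) dx = |I| e^{iθ}. Then there exists c ∈ [a,b] such that |I| = f(a) · Re(e^{-iθ} ∫_a^c g(x) dx) + f(b) · Re(e^{-iθ} ∫_c^b g(x) dx); in particular |I| ≤ |f(a) ∫_a^c g| + |f(b) ∫_c^b g|. -/

import Mathlib

open Set MeasureTheory intervalIntegral Filter

private lemma real_smvt_mono (a b : ℝ) (hab : a ≤ b) (f h : ℝ → ℝ)
    (hf : MonotoneOn f (Set.Icc a b)) (hh : ContinuousOn h (Set.Icc a b)) :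
    ∃ c ∈ Set.Icc a b,
      ∫ x in a..b, f x * h x = f a * (∫ t in a..c, h t) + f b * ∫ t in c..b, h t := by
  have huIcc : Set.uIcc a b = Set.Icc a b := uIcc_of_le hab
  -- integrability facts
  have hhi : IntervalIntegrable h volume a b := (huIcc ▸ hh).intervalIntegrable
  have hfi : IntervalIntegrable f volume a b := (huIcc ▸ hf).intervalIntegrable
  have hfhi : IntervalIntegrable (fun x => f x * h x) volume a b :=
    hfi.mul_continuousOn (huIcc ▸ hh)
  -- the primitive
  set F : ℝ → ℝ := fun y => ∫ t in a..y, h t with hF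
  have hFcont : ContinuousOn F (Set.Icc a b) := by
    have := continuousOn_primitive_interval (μ := volume) (a := a) (b := b) (f := h)
      (by rw [huIcc]; exact (hh.mono (le_refl _)).integrableOn_compact isCompact_Icc)
    rwa [huIcc] at this
  -- min and max of F
  obtain ⟨p, hp, hpmin⟩ := isCompact_Icc.exists_isMinOn (Set.nonempty_Icc.2 hab) hFcont
  obtain ⟨q, hq, hqmax⟩ := isCompact_Icc.exists_isMaxOn (Set.nonempty_Icc.2 hab) hFcont
  set m := F p with hmdef
  set M := F q with hMdef
  have hm : ∀ y ∈ Set.Icc a b, m ≤ F y := fun y hy => hpmin hy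
  have hM : ∀ y ∈ Set.Icc a b, F y ≤ M := fun y hy => hqmax hy
  -- bound on h
  obtain ⟨C, hC⟩ := isCompact_Icc.exists_bound_of_continuousOn hh
  have hC0 : 0 ≤ C := le_trans (norm_nonneg _) (hC a (Set.left_mem_Icc.2 hab))
  set D : ℝ := f b * F b - ∫ x in a..b, f x * h x with hD
  set Δ : ℝ := f b - f a with hΔ
  have hΔ0 : 0 ≤ Δ := sub_nonneg.2 (hf (Set.left_mem_Icc.2 hab) (Set.right_mem_Icc.2 hab) hab)
  -- key inequality via Riemann sums
  have main : ∀ n : ℕ, m * Δ - C * Δ * ((b - a)/(n+1)) ≤ D ∧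
      D ≤ M * Δ + C * Δ * ((b - a)/(n+1)) := by
    intro n
    set N : ℕ := n + 1 with hN
    set δ : ℝ := (b - a) / N with hδ
    have hcast : ((N : ℝ)) = (n : ℝ) + 1 := by push_cast [hN]; ring
    have hδ0 : 0 ≤ δ := div_nonneg (sub_nonneg.2 hab) (by positivity)
    set x : ℕ → ℝ := fun i => a + i * δ with hx
    have hx0 : x 0 = a := by simp [hx]
    have hxN : x N = b := by
      simp only [hx, hδ]
      have : (N : ℝ) ≠ 0 := by rw [hcast]; positivity
      field_simp
      ring
    have hxmono : ∀ i j : ℕ, i ≤ j → x i ≤ x j := by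
      intro i j hij
      simp only [hx]
      have h1 : (i : ℝ) ≤ j := Nat.cast_le.2 hij
      nlinarith
    have hxmem : ∀ i : ℕ, i ≤ N → x i ∈ Set.Icc a b := by
      intro i hi
      constructor
      · rw [← hx0]; exact hxmono 0 i (Nat.zero_le _)
      · rw [← hxN]; exact hxmono i N hi
    have hsub : ∀ i : ℕ, i < N → Set.uIcc (x i) (x (i+1)) ⊆ Set.Icc a b := by
      intro i hi
      rw [Set.uIcc_of_le (hxmono i (i+1) (Nat.le_succ _))]
      exact Set.Icc_subset_Icc (hxmem i hi.le).1 (hxmem (i+1) hi).2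
    have hsub' : ∀ i : ℕ, i < N → Set.uIcc (x i) (x (i+1)) ⊆ Set.uIcc a b := by
      intro i hi; rw [huIcc]; exact hsub i hi
    have hhii : ∀ i < N, IntervalIntegrable h volume (x i) (x (i+1)) :=
      fun i hi => hhi.mono_set (hsub' i hi)
    have hfhii : ∀ i < N, IntervalIntegrable (fun t => f t * h t) volume (x i) (x (i+1)) :=
      fun i hi => hfhi.mono_set (hsub' i hi)
    have hhia : ∀ i, i ≤ N → IntervalIntegrable h volume a (x i) := by
      intro i hi
      refine hhi.mono_set ?_
      rw [huIcc, Set.uIcc_of_le (hxmem i hi).1]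
      exact Set.Icc_subset_Icc le_rfl (hxmem i hi).2
    -- F difference
    have hFdiff : ∀ i < N, F (x (i+1)) - F (x i) = ∫ t in x i..x (i+1), h t := by
      intro i hi
      exact integral_interval_sub_left (hhia (i+1) hi) (hhia i hi.le)
    -- the Riemann sum
    set T : ℝ := ∑ i ∈ Finset.range N, f (x (i+1)) * ∫ t in x i..x (i+1), h t with hT
    -- Abel: f b * F b - T = ∑ Δf_i * F(x i)
    have habel : f b * F b - T = ∑ i ∈ Finset.range N, (f (x (i+1)) - f (x i)) * F (x i) := by
      have htel : ∑ i ∈ Finset.range N,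
          (f (x (i+1)) * F (x (i+1)) - f (x i) * F (x i)) = f b * F b := by
        rw [Finset.sum_range_sub (fun i => f (x i) * F (x i))]
        have hFa : F a = 0 := by simp [hF]
        rw [hxN, hx0, hFa]; ring
      have hTsum : T + ∑ i ∈ Finset.range N, (f (x (i+1)) - f (x i)) * F (x i)
          = f b * F b := by
        rw [hT, ← Finset.sum_add_distrib, ← htel]
        apply Finset.sum_congr rfl
        intro i hi
        rw [← hFdiff i (Finset.mem_range.1 hi)]
        ring
      linarith
    -- bounds on the Abel sum
    have hΔi : ∀ i < N, 0 ≤ f (x (i+1)) - f (x i) := by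
      intro i hi
      exact sub_nonneg.2 (hf (hxmem i hi.le) (hxmem (i+1) hi) (hxmono i (i+1) (Nat.le_succ _)))
    have hsumΔ : ∑ i ∈ Finset.range N, (f (x (i+1)) - f (x i)) = Δ := by
      rw [Finset.sum_range_sub (fun i => f (x i)), hxN, hx0]
    have habel_ub : f b * F b - T ≤ M * Δ := by
      rw [habel, ← hsumΔ, Finset.mul_sum]
      apply Finset.sum_le_sum
      intro i hi
      have hi' := Finset.mem_range.1 hi
      have := hM (x i) (hxmem i hi'.le)
      nlinarith [hΔi i hi']
    have habel_lb : m * Δ ≤ f b * F b - T := by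
      rw [habel, ← hsumΔ, Finset.mul_sum]
      apply Finset.sum_le_sum
      intro i hi
      have hi' := Finset.mem_range.1 hi
      have := hm (x i) (hxmem i hi'.le)
      nlinarith [hΔi i hi']
    -- error bound
    have herr : |(∫ t in a..b, f t * h t) - T| ≤ C * Δ * δ := by
      have hsplit : ∫ t in a..b, f t * h t
          = ∑ i ∈ Finset.range N, ∫ t in x i..x (i+1), f t * h t := by
        rw [sum_integral_adjacent_intervals hfhii, hx0, hxN]
      rw [hsplit, ← Finset.sum_sub_distrib]
      refine (Finset.abs_sum_le_sum_abs _ _).trans ?_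
      have hterm : ∀ i ∈ Finset.range N,
          |(∫ t in x i..x (i+1), f t * h t) - f (x (i+1)) * ∫ t in x i..x (i+1), h t|
            ≤ (f (x (i+1)) - f (x i)) * C * δ := by
        intro i hi
        have hi' := Finset.mem_range.1 hi
        have heq : (∫ t in x i..x (i+1), f t * h t) - f (x (i+1)) * ∫ t in x i..x (i+1), h t
            = ∫ t in x i..x (i+1), (f t - f (x (i+1))) * h t := by
          rw [← intervalIntegral.integral_const_mul, ← intervalIntegral.integral_sub
            (hfhii i hi') ((hhii i hi').const_mul _)]
          apply intervalIntegral.integral_congr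
          intro t ht
          ring
        rw [heq]
        have hb1 : ∀ t ∈ Set.uIoc (x i) (x (i+1)),
            ‖(f t - f (x (i+1))) * h t‖ ≤ (f (x (i+1)) - f (x i)) * C := by
          intro t ht
          have ht' : t ∈ Set.Icc (x i) (x (i+1)) := by
            have := Set.uIoc_subset_uIcc (a := x i) (b := x (i+1)) ht
            rwa [Set.uIcc_of_le (hxmono i (i+1) (Nat.le_succ _))] at this
          have htm : t ∈ Set.Icc a b := hsub i hi' (by
            rw [Set.uIcc_of_le (hxmono i (i+1) (Nat.le_succ _))]; exact ht')
          have h1 : f (x i) ≤ f t := hf (hxmem i hi'.le) htm ht'.1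
          have h2 : f t ≤ f (x (i+1)) := hf htm (hxmem (i+1) hi') ht'.2
          have h3 : ‖h t‖ ≤ C := hC t htm
          rw [norm_mul]
          have hfn : ‖f t - f (x (i+1))‖ ≤ f (x (i+1)) - f (x i) := by
            rw [Real.norm_eq_abs, abs_sub_comm, abs_of_nonneg (by linarith)]
            linarith
          exact mul_le_mul hfn h3 (norm_nonneg _) (by linarith)
        have hni := intervalIntegral.norm_integral_le_of_norm_le_const hb1
        have hlen : |x (i+1) - x i| = δ := by
          simp only [hx]
          push_cast
          rw [abs_of_nonneg (by nlinarith)]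
          ring
        rw [hlen] at hni
        exact hni
      refine (Finset.sum_le_sum hterm).trans ?_
      have : ∑ i ∈ Finset.range N, (f (x (i+1)) - f (x i)) * C * δ = Δ * C * δ := by
        rw [← Finset.sum_mul, ← Finset.sum_mul, hsumΔ]
      rw [this]
      have : Δ * C * δ = C * Δ * δ := by ring
      rw [this]
    have habs := abs_le.1 herr
    have hδeq : δ = (b - a) / ((n : ℝ) + 1) := by rw [hδ, hcast]
    constructor
    · rw [← hδeq]; linarith [habs.2]
    · rw [← hδeq]; linarith [habs.1]
  have hten : Tendsto (fun n : ℕ => C * Δ * ((b - a)/((n : ℝ)+1))) atTop (nhds 0) := by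
    have h1 : Tendsto (fun n : ℕ => (b - a) * (1/((n : ℝ)+1))) atTop (nhds ((b - a) * 0)) :=
      tendsto_const_nhds.mul tendsto_one_div_add_atTop_nhds_zero_nat
    have h2 : Tendsto (fun n : ℕ => C * Δ * ((b - a) * (1/((n : ℝ)+1)))) atTop
        (nhds (C * Δ * ((b - a) * 0))) := tendsto_const_nhds.mul h1
    simpa [mul_one_div, div_eq_mul_inv] using h2
  have key_ub : D ≤ M * Δ := by
    have htend : Tendsto (fun n : ℕ => M * Δ + C * Δ * ((b - a)/((n : ℝ)+1))) atTop
        (nhds (M * Δ + 0)) := tendsto_const_nhds.add hten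
    rw [add_zero] at htend
    exact ge_of_tendsto' htend fun n => (main n).2
  have key_lb : m * Δ ≤ D := by
    have htend : Tendsto (fun n : ℕ => m * Δ - C * Δ * ((b - a)/((n : ℝ)+1))) atTop
        (nhds (m * Δ - 0)) := tendsto_const_nhds.sub hten
    rw [sub_zero] at htend
    exact le_of_tendsto' htend fun n => (main n).1
  -- now conclude via intermediate value theorem
  rcases eq_or_lt_of_le hΔ0 with hΔeq | hΔpos
  · -- f is constant on [a,b]
    refine ⟨b, Set.right_mem_Icc.2 hab, ?_⟩
    have hconst : ∀ t ∈ Set.Icc a b, f t = f a := by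
      intro t ht
      have h1 : f a ≤ f t := hf (Set.left_mem_Icc.2 hab) ht ht.1
      have h2 : f t ≤ f b := hf ht (Set.right_mem_Icc.2 hab) ht.2
      have : f b = f a := by rw [hΔ] at hΔeq; linarith
      linarith
    have : ∫ x in a..b, f x * h x = f a * ∫ t in a..b, h t := by
      rw [← intervalIntegral.integral_const_mul]
      apply intervalIntegral.integral_congr
      intro t ht
      rw [huIcc] at ht
      show f t * h t = f a * h t
      rw [hconst t ht]
    rw [this, intervalIntegral.integral_same]
    ring
  · -- IVT
    have hmM : m ≤ M := le_trans (hm q hq) (le_refl M)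
    have hy1 : m ≤ D / Δ := (le_div_iff₀ hΔpos).2 (by linarith)
    have hy2 : D / Δ ≤ M := (div_le_iff₀ hΔpos).2 (by linarith)
    have hpq : Set.uIcc p q ⊆ Set.Icc a b := Set.uIcc_subset_Icc hp hq
    obtain ⟨c, hc, hFc⟩ := intermediate_value_uIcc (hFcont.mono hpq)
      (show D / Δ ∈ Set.uIcc (F p) (F q) by
        rw [← hmdef, ← hMdef, Set.uIcc_of_le hmM]; exact ⟨hy1, hy2⟩)
    refine ⟨c, hpq hc, ?_⟩
    have hcmem : c ∈ Set.Icc a b := hpq hc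
    have hsub2 : ∫ t in c..b, h t = F b - F c := by
      have hic : IntervalIntegrable h volume a c := by
        refine hhi.mono_set ?_
        rw [huIcc, Set.uIcc_of_le hcmem.1]
        exact Set.Icc_subset_Icc le_rfl hcmem.2
      exact (integral_interval_sub_left hhi hic).symm
    have hDc : D = Δ * F c := by
      rw [hFc]
      field_simp
    have : ∫ x in a..b, f x * h x = f b * F b - D := by rw [hD]; ring
    rw [this, hDc, hsub2, hΔ]
    ring

private lemma real_smvt (a b : ℝ) (hab : a ≤ b) (f h : ℝ → ℝ)
    (hf : MonotoneOn f (Set.Icc a b) ∨ AntitoneOn f (Set.Icc a b))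
    (hh : ContinuousOn h (Set.Icc a b)) :
    ∃ c ∈ Set.Icc a b,
      ∫ x in a..b, f x * h x = f a * (∫ t in a..c, h t) + f b * ∫ t in c..b, h t := by
  rcases hf with hf | hf
  · exact real_smvt_mono a b hab f h hf hh
  · obtain ⟨c, hc, heq⟩ := real_smvt_mono a b hab (fun x => -f x) h hf.neg hh
    refine ⟨c, hc, ?_⟩
    have : ∫ x in a..b, (fun x => -f x) x * h x = -∫ x in a..b, f x * h x := by
      rw [← intervalIntegral.integral_neg]
      apply intervalIntegral.integral_congr
      intro t _
      ring
    rw [this] at heq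
    have heq' : -(∫ x in a..b, f x * h x)
        = -f a * (∫ t in a..c, h t) + -f b * ∫ t in c..b, h t := heq
    linarith

theorem complex_second_mean_value (a b : ℝ) (hab : a ≤ b) (f : ℝ → ℝ) (g : ℝ → ℂ)
    (hf : MonotoneOn f (Set.Icc a b) ∨ AntitoneOn f (Set.Icc a b))
    (hg : ContinuousOn g (Set.Icc a b)) :
    ∃ c ∈ Set.Icc a b,
      ‖(∫ x in a..b, (f x : ℂ) * g x)‖ =
        f a * (Complex.exp (-((∫ x in a..b, (f x : ℂ) * g x).arg : ℂ) * Complex.I) *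
            ∫ x in a..c, g x).re +
        f b * (Complex.exp (-((∫ x in a..b, (f x : ℂ) * g x).arg : ℂ) * Complex.I) *
            ∫ x in c..b, g x).re ∧
      ‖(∫ x in a..b, (f x : ℂ) * g x)‖ ≤
        ‖((f a : ℂ) * ∫ x in a..c, g x)‖ +
        ‖((f b : ℂ) * ∫ x in c..b, g x)‖ := by
  have huIcc : Set.uIcc a b = Set.Icc a b := Set.uIcc_of_le hab
  set I₀ : ℂ := ∫ x in a..b, (f x : ℂ) * g x with hI₀
  set θ : ℝ := I₀.arg with hθ
  set e : ℂ := Complex.exp (-(θ : ℂ) * Complex.I) with he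
  have heI : e * I₀ = (‖I₀‖ : ℂ) := by
    have h1 := Complex.norm_mul_exp_arg_mul_I I₀
    have h2 : e * Complex.exp ((I₀.arg : ℂ) * Complex.I) = 1 := by
      rw [he, hθ, ← Complex.exp_add, neg_mul, neg_add_cancel, Complex.exp_zero]
    calc e * I₀ = e * ((‖I₀‖ : ℂ) * Complex.exp ((I₀.arg : ℂ) * Complex.I)) := by
          rw [h1]
      _ = e * Complex.exp ((I₀.arg : ℂ) * Complex.I) * (‖I₀‖ : ℂ) := by ring
      _ = (‖I₀‖ : ℂ) := by rw [h2, one_mul]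
  -- integrability
  have hfi : IntervalIntegrable f volume a b := by
    rcases hf with h' | h'
    · exact (huIcc ▸ h').intervalIntegrable
    · exact (huIcc ▸ h').intervalIntegrable
  have hfci : IntervalIntegrable (fun x => (f x : ℂ)) volume a b := ⟨hfi.1.ofReal, hfi.2.ofReal⟩
  have hgc : ContinuousOn g (Set.uIcc a b) := huIcc ▸ hg
  have hfgi : IntervalIntegrable (fun x => (f x : ℂ) * g x) volume a b :=
    hfci.mul_continuousOn hgc
  -- real part commutes with interval integrals of e * g
  have claimA : ∀ u v : ℝ, Set.uIcc u v ⊆ Set.Icc a b →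
      (e * ∫ x in u..v, g x).re = ∫ x in u..v, (e * g x).re := by
    intro u v huv
    have hgi : IntervalIntegrable g volume u v :=
      (hg.mono huv).intervalIntegrable
    rw [← intervalIntegral.integral_const_mul]
    exact (Complex.reCLM.intervalIntegral_comp_comm (hgi.const_mul e)).symm
  -- |I₀| as a real integral
  set h : ℝ → ℝ := fun x => (e * g x).re with hh
  have hhcont : ContinuousOn h (Set.Icc a b) :=
    Complex.continuous_re.comp_continuousOn (continuousOn_const.mul hg)
  have habs_int : (‖I₀‖ : ℝ) = ∫ x in a..b, f x * h x := by
    have h3 : e * I₀ = ∫ x in a..b, e * ((f x : ℂ) * g x) := by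
      rw [intervalIntegral.integral_const_mul]
    have h4 : (e * I₀).re = ∫ x in a..b, (e * ((f x : ℂ) * g x)).re := by
      rw [h3]
      exact (Complex.reCLM.intervalIntegral_comp_comm (hfgi.const_mul e)).symm
    have h5 : ∀ x : ℝ, (e * ((f x : ℂ) * g x)).re = f x * h x := by
      intro x
      have : e * ((f x : ℂ) * g x) = (f x : ℂ) * (e * g x) := by ring
      rw [this, Complex.re_ofReal_mul]
    calc (‖I₀‖ : ℝ) = (e * I₀).re := by rw [heI, Complex.ofReal_re]
      _ = ∫ x in a..b, (e * ((f x : ℂ) * g x)).re := h4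
      _ = ∫ x in a..b, f x * h x := by
          apply intervalIntegral.integral_congr
          intro x _
          exact h5 x
  obtain ⟨c, hc, heq⟩ := real_smvt a b hab f h hf hhcont
  have hsub1 : Set.uIcc a c ⊆ Set.Icc a b := by
    rw [Set.uIcc_of_le hc.1]
    exact Set.Icc_subset_Icc le_rfl hc.2
  have hsub2 : Set.uIcc c b ⊆ Set.Icc a b := by
    rw [Set.uIcc_of_le hc.2]
    exact Set.Icc_subset_Icc hc.1 le_rfl
  have habse : ‖e‖ = 1 := by
    rw [he, Complex.norm_exp]
    simp
  have hfirst : ‖I₀‖ =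
      f a * (e * ∫ x in a..c, g x).re + f b * (e * ∫ x in c..b, g x).re := by
    rw [claimA a c hsub1, claimA c b hsub2, habs_int, heq]
  refine ⟨c, hc, hfirst, ?_⟩
  have hbound : ∀ (r : ℝ) (w : ℂ), r * (e * w).re ≤ ‖((r : ℂ) * w)‖ := by
    intro r w
    calc r * (e * w).re ≤ |r * (e * w).re| := le_abs_self _
      _ = |r| * |(e * w).re| := abs_mul _ _
      _ ≤ |r| * ‖e * w‖ := by
          exact mul_le_mul_of_nonneg_left (Complex.abs_re_le_norm _) (abs_nonneg _)
      _ = |r| * ‖w‖ := by rw [norm_mul, habse, one_mul]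
      _ = ‖((r : ℂ) * w)‖ := by rw [norm_mul, Complex.norm_real, Real.norm_eq_abs]
  rw [hfirst]
  exact add_le_add (hbound (f a) _) (hbound (f b) _)
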